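/- In the monoid LS_n with n ≥ 3, the relation L* ∘ R* is not equal to R* ∘ L*. Specifically, for α = identity on {1,2} and β = identity on {1,3}, the pair (α, β) lies in L* ∘ R* but not in R* ∘ L*. -/
import Mathlib


/-- Partial transformations of the chain `Fin n`. -/
abbrev PT (n : ℕ) := Fin n → Option (Fin n)

/-- Composition of partial transformations: apply `α` first, then `β`. -/
def comp {n : ℕ} (α β : PT n) : PT n := fun x => (α x).bind β

/-- `α` is isotone (order-preserving on its domain). -/
def IsIsotone {n : ℕ} (α : PT n) : Prop :=
  ∀ x y a b : Fin n, α x = some a → α y = some b → x ≤ y → a ≤ b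

/-- `α` is order-decreasing on its domain. -/
def IsDecreasing {n : ℕ} (α : PT n) : Prop :=
  ∀ x a : Fin n, α x = some a → a ≤ x

/-- The large Schröder monoid: isotone, order-decreasing partial transformations. -/
def LS (n : ℕ) : Set (PT n) := {α | IsIsotone α ∧ IsDecreasing α}

/-- The image of a partial transformation. -/
def Im {n : ℕ} (α : PT n) : Set (Fin n) := {y | ∃ x, α x = some y}

/-- The height of a partial transformation is the size of its image. -/
noncomputable def height {n : ℕ} (α : PT n) : ℕ := (Im α).ncard

/-- The kernel of `α`, as a set of pairs of elements of the domain. -/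
def kerS {n : ℕ} (α : PT n) : Set (Fin n × Fin n) :=
  {p | ∃ a : Fin n, α p.1 = some a ∧ α p.2 = some a}

/-- The set of fixed points of `α`. -/
def FixPts {n : ℕ} (α : PT n) : Set (Fin n) := {x | α x = some x}

/-- `L*` on `LS n`, characterized by equality of images. -/
def LStar {n : ℕ} (α β : PT n) : Prop := Im α = Im β

/-- `R*` on `LS n`, characterized by equality of kernels. -/
def RStar {n : ℕ} (α β : PT n) : Prop := kerS α = kerS β

theorem LS_LstarRstar_ne_RstarLstar (n : ℕ) (hn : 3 ≤ n)
    (α β : PT n)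
    (hαdef : α = fun x => if x.val = 0 ∨ x.val = 1 then some x else none)
    (hβdef : β = fun x => if x.val = 0 ∨ x.val = 2 then some x else none) :
    (∃ γ ∈ LS n, LStar α γ ∧ RStar γ β) ∧ ¬(∃ γ ∈ LS n, RStar α γ ∧ LStar γ β) := by
  subst hαdef hβdef
  have h0 : (0:ℕ) < n := by omega
  have h1 : (1:ℕ) < n := by omega
  have h2 : (2:ℕ) < n := by omega
  constructor
  · refine ⟨fun x => if x.val = 0 then some ⟨0, h0⟩ else if x.val = 2 then some ⟨1, h1⟩ else none,
      ⟨?_, ?_⟩, ?_, ?_⟩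
    · intro x y a b hx hy hxy
      dsimp only at hx hy
      by_cases hx0 : x.val = 0
      · rw [if_pos hx0] at hx; cases hx
        by_cases hy0 : y.val = 0
        · rw [if_pos hy0] at hy; cases hy; exact le_refl _
        · by_cases hy2 : y.val = 2
          · rw [if_neg hy0, if_pos hy2] at hy; cases hy; exact Fin.le_def.mpr (show (0:ℕ) ≤ 1 by omega)
          · rw [if_neg hy0, if_neg hy2] at hy; cases hy
      · by_cases hx2 : x.val = 2
        · rw [if_neg hx0, if_pos hx2] at hx; cases hx
          have hxy' := Fin.le_def.mp hxy
          by_cases hy0 : y.val = 0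
          · omega
          · by_cases hy2 : y.val = 2
            · rw [if_neg hy0, if_pos hy2] at hy; cases hy; exact le_refl _
            · rw [if_neg hy0, if_neg hy2] at hy; cases hy
        · rw [if_neg hx0, if_neg hx2] at hx; cases hx
    · intro x a hx
      dsimp only at hx
      by_cases hx0 : x.val = 0
      · rw [if_pos hx0] at hx; cases hx
        exact Fin.le_def.mpr (show (0:ℕ) ≤ x.val by omega)
      · by_cases hx2 : x.val = 2
        · rw [if_neg hx0, if_pos hx2] at hx; cases hx
          exact Fin.le_def.mpr (show (1:ℕ) ≤ x.val by omega)
        · rw [if_neg hx0, if_neg hx2] at hx; cases hx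
    · ext y
      constructor
      · rintro ⟨x, hx⟩
        dsimp only at hx
        by_cases h : x.val = 0 ∨ x.val = 1
        · rw [if_pos h] at hx
          cases hx
          rcases h with h | h
          · exact ⟨⟨0, h0⟩, by simp [Fin.ext_iff, h]⟩
          · exact ⟨⟨2, h2⟩, by simp [Fin.ext_iff, h]⟩
        · rw [if_neg h] at hx; cases hx
      · rintro ⟨x, hx⟩
        dsimp only at hx
        by_cases hx0 : x.val = 0
        · rw [if_pos hx0] at hx; cases hx
          exact ⟨⟨0, h0⟩, by simp⟩
        · by_cases hx2 : x.val = 2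
          · rw [if_neg hx0, if_pos hx2] at hx; cases hx
            exact ⟨⟨1, h1⟩, by simp⟩
          · rw [if_neg hx0, if_neg hx2] at hx; cases hx
    · ext ⟨p, q⟩
      simp only [kerS, Set.mem_setOf_eq]
      constructor
      · rintro ⟨a, hp, hq⟩
        have key : ∀ r : Fin n,
            (if r.val = 0 then some ⟨0, h0⟩ else if r.val = 2 then some ⟨1, h1⟩ else none)
              = some a → (r.val = 0 ∧ a.val = 0) ∨ (r.val = 2 ∧ a.val = 1) := by
          intro r hr
          by_cases hr0 : r.val = 0
          · rw [if_pos hr0] at hr; cases hr; exact Or.inl ⟨hr0, rfl⟩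
          · by_cases hr2 : r.val = 2
            · rw [if_neg hr0, if_pos hr2] at hr; cases hr; exact Or.inr ⟨hr2, rfl⟩
            · rw [if_neg hr0, if_neg hr2] at hr; cases hr
        rcases key p hp with ⟨hp1, ha⟩ | ⟨hp1, ha⟩ <;>
          rcases key q hq with ⟨hq1, ha'⟩ | ⟨hq1, ha'⟩
        · obtain rfl : p = q := Fin.ext (by omega)
          exact ⟨p, by simp [hp1], by simp [hp1]⟩
        · omega
        · omega
        · obtain rfl : p = q := Fin.ext (by omega)
          exact ⟨p, by simp [hp1], by simp [hp1]⟩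
      · rintro ⟨a, hp, hq⟩
        by_cases hc : p.val = 0 ∨ p.val = 2
        · rw [if_pos hc] at hp
          cases hp
          by_cases hc' : q.val = 0 ∨ q.val = 2
          · rw [if_pos hc'] at hq
            obtain rfl : q = p := Option.some.inj hq
            rcases hc with h | h
            · exact ⟨⟨0, h0⟩, by simp [h], by simp [h]⟩
            · exact ⟨⟨1, h1⟩, by simp [h], by simp [h]⟩
          · rw [if_neg hc'] at hq; cases hq
        · rw [if_neg hc] at hp; cases hp
  · rintro ⟨γ, ⟨_, hdec⟩, hker, him⟩
    have h2mem : (⟨2, h2⟩ : Fin n) ∈ Im γ := by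
      rw [him]
      exact ⟨⟨2, h2⟩, by simp⟩
    obtain ⟨x, hx⟩ := h2mem
    have hxker : ((x, x) : Fin n × Fin n) ∈ kerS γ := ⟨⟨2, h2⟩, hx, hx⟩
    rw [← hker] at hxker
    obtain ⟨a, hpa, -⟩ := hxker
    have hle := Fin.le_def.mp (hdec x _ hx)
    dsimp only at hpa
    have hle' : (2:ℕ) ≤ x.val := hle
    by_cases h : x.val = 0 ∨ x.val = 1
    · omega
    · rw [if_neg h] at hpa; cases hpa
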